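/- Let T = [[A, 0], [0, D]] be a block-diagonal operator on H₁ ⊕ H₂ and r ≥ 1. Then for every unit vector k in H₁ ⊕ H₂, |⟨T k, k⟩|^r ≤ ⟨[[ (1/2)(|A|^r + |A*|^r), 0], [0, (1/2)(|D|^r + |D*|^r)]] k, k⟩. -/

import Mathlib

open scoped InnerProductSpace
open ContinuousLinearMap Complex

variable {H₁ H₂ : Type*}
  [NormedAddCommGroup H₁] [InnerProductSpace ℂ H₁] [CompleteSpace H₁]
  [NormedAddCommGroup H₂] [InnerProductSpace ℂ H₂] [CompleteSpace H₂]

/-- `T ^ e` for a (positive) operator `T`, via the continuous functional calculus. -/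
noncomputable def opow {E : Type*} [NormedAddCommGroup E] [InnerProductSpace ℂ E]
    [CompleteSpace E] (T : E →L[ℂ] E) (e : ℝ) : E →L[ℂ] E :=
  cfc (fun t : ℝ => t ^ e) T

/-- The absolute value `|T| = (T*T)^(1/2)` of an operator between Hilbert spaces. -/
noncomputable def oabs {E F : Type*} [NormedAddCommGroup E] [InnerProductSpace ℂ E]
    [CompleteSpace E] [NormedAddCommGroup F] [InnerProductSpace ℂ F] [CompleteSpace F]
    (T : E →L[ℂ] F) : E →L[ℂ] E :=
  cfc Real.sqrt ((ContinuousLinearMap.adjoint T).comp T)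

section Aux

variable {E : Type*} [NormedAddCommGroup E] [InnerProductSpace ℂ E] [CompleteSpace E]

lemma my_poly_intertwine (a : E →L[ℂ] E) (P : Polynomial ℝ) :
    a * Polynomial.aeval (star a * a) P = Polynomial.aeval (a * star a) P * a := by
  have hpow : ∀ n : ℕ, a * (star a * a) ^ n = (a * star a) ^ n * a := by
    intro n
    induction n with
    | zero => simp
    | succ n ih =>
      rw [pow_succ, pow_succ, ← mul_assoc, ih]
      noncomm_ring
  induction P using Polynomial.induction_on' with
  | add p q hp hq => simp [map_add, mul_add, add_mul, hp, hq]
  | monomial n c =>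
    simp only [Polynomial.aeval_monomial]
    rw [← mul_assoc, ← Algebra.commutes c a, mul_assoc, hpow, ← mul_assoc]

lemma my_intertwine (a : E →L[ℂ] E) (f : ℝ → ℝ) (hf : Continuous f) :
    a * cfc f (star a * a) = cfc f (a * star a) * a := by
  have hp : IsSelfAdjoint (star a * a) := IsSelfAdjoint.star_mul_self a
  have hq : IsSelfAdjoint (a * star a) := IsSelfAdjoint.mul_star_self a
  set p := star a * a with hp_def
  set q := a * star a with hq_def
  have hKp : IsCompact (spectrum ℝ p) := ContinuousFunctionalCalculus.isCompact_spectrum p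
  have hKq : IsCompact (spectrum ℝ q) := ContinuousFunctionalCalculus.isCompact_spectrum q
  set K : Set ℝ := spectrum ℝ p ∪ spectrum ℝ q with hK_def
  have hK : IsCompact K := hKp.union hKq
  haveI : CompactSpace K := isCompact_iff_compactSpace.mp hK
  have hsubp : spectrum ℝ p ⊆ K := Set.subset_union_left
  have hsubq : spectrum ℝ q ⊆ K := Set.subset_union_right
  let ιp : C(spectrum ℝ p, K) := ⟨Set.inclusion hsubp, continuous_inclusion hsubp⟩
  let ιq : C(spectrum ℝ q, K) := ⟨Set.inclusion hsubq, continuous_inclusion hsubq⟩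
  -- the closed set of functions where the identity holds
  set S : Set C(K, ℝ) :=
    {g | a * cfcHom hp (g.comp ιp) = cfcHom hq (g.comp ιq) * a} with hS_def
  have hS_closed : IsClosed S := by
    apply isClosed_eq
    · exact continuous_const.mul
        ((cfcHom_isClosedEmbedding hp).continuous.comp (ContinuousMap.continuous_precomp ιp))
    · exact ((cfcHom_isClosedEmbedding hq).continuous.comp
        (ContinuousMap.continuous_precomp ιq)).mul continuous_const
  have hcfcP : ∀ (b : E →L[ℂ] E) (hb : IsSelfAdjoint b) (P : Polynomial ℝ)
      (hbs : spectrum ℝ b ⊆ K),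
      cfcHom hb ((P.toContinuousMapOn K).comp
        ⟨Set.inclusion hbs, continuous_inclusion hbs⟩) = Polynomial.aeval b P := by
    intro b hb P hbs
    rw [← cfc_polynomial P b hb, cfc_apply P.eval b hb (P.continuous_aeval.continuousOn)]
    exact congrArg _ (by ext x; rfl)
  have hpolyS : (polynomialFunctions K : Set C(K, ℝ)) ⊆ S := by
    rintro g ⟨P, -, rfl⟩
    show a * cfcHom hp ((P.toContinuousMapOn K).comp ιp)
        = cfcHom hq ((P.toContinuousMapOn K).comp ιq) * a
    rw [hcfcP p hp P hsubp, hcfcP q hq P hsubq]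
    exact my_poly_intertwine a P
  have hdense : (S : Set C(K, ℝ)) = Set.univ := by
    have h1 := polynomialFunctions.topologicalClosure K
    have h2 : closure (polynomialFunctions K : Set C(K, ℝ)) ⊆ S :=
      closure_minimal hpolyS hS_closed
    rw [← Subalgebra.topologicalClosure_coe, h1] at h2
    exact Set.eq_univ_of_univ_subset h2
  -- apply to the restriction of f
  have hmem : (ContinuousMap.mk f hf).restrict K ∈ S := by
    rw [hdense]; trivial
  have hres_p : cfcHom hp (((ContinuousMap.mk f hf).restrict K).comp ιp) = cfc f p := by
    rw [cfc_apply f p hp hf.continuousOn]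
    exact congrArg _ (by ext x; rfl)
  have hres_q : cfcHom hq (((ContinuousMap.mk f hf).restrict K).comp ιq) = cfc f q := by
    rw [cfc_apply f q hq hf.continuousOn]
    exact congrArg _ (by ext x; rfl)
  have hmem' : a * cfcHom hp (((ContinuousMap.mk f hf).restrict K).comp ιp)
      = cfcHom hq (((ContinuousMap.mk f hf).restrict K).comp ιq) * a := hmem
  rw [hres_p, hres_q] at hmem'
  exact hmem'


lemma my_inner_re_nonneg {S : E →L[ℂ] E} (h : 0 ≤ S) (x : E) : 0 ≤ (⟪S x, x⟫_ℂ).re := by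
  simpa using ((ContinuousLinearMap.nonneg_iff_isPositive S).mp h).re_inner_nonneg_left x

lemma my_inner_re_mono {S T : E →L[ℂ] E} (h : S ≤ T) (x : E) :
    (⟪S x, x⟫_ℂ).re ≤ (⟪T x, x⟫_ℂ).re := by
  have h0 := ((ContinuousLinearMap.le_def S T).mp h).re_inner_nonneg_left x
  rw [ContinuousLinearMap.sub_apply, inner_sub_left] at h0
  simpa [sub_nonneg] using h0

lemma my_inner_re_algebraMap (c : ℝ) (x : E) :
    (⟪(algebraMap ℝ (E →L[ℂ] E) c) x, x⟫_ℂ).re = c * ‖x‖ ^ 2 := by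
  rw [Algebra.algebraMap_eq_smul_one]
  have : ((c • (1 : E →L[ℂ] E)) x) = (c : ℂ) • x := by
    simp [ContinuousLinearMap.smul_apply, Complex.real_smul]
  rw [this, inner_smul_left, inner_self_eq_norm_sq_to_K]
  simp [Complex.conj_ofReal, ← Complex.ofReal_pow, ← Complex.ofReal_mul]

lemma my_inner_selfadj_apply_mul {S : E →L[ℂ] E} (hS : IsSelfAdjoint S) (x : E) :
    (⟪(S * S) x, x⟫_ℂ) = ⟪S x, S x⟫_ℂ := by
  have hadj : ContinuousLinearMap.adjoint S = S := by
    rw [← ContinuousLinearMap.star_eq_adjoint]; exact hS.star_eq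
  calc ⟪(S * S) x, x⟫_ℂ = ⟪(ContinuousLinearMap.adjoint S) (S x), x⟫_ℂ := by rw [hadj]; rfl
    _ = ⟪S x, S x⟫_ℂ := ContinuousLinearMap.adjoint_inner_left S x (S x)

lemma my_norm_sq_eq {S : E →L[ℂ] E} (hS : IsSelfAdjoint S) (x : E) :
    ‖S x‖ ^ 2 = (⟪(S * S) x, x⟫_ℂ).re := by
  rw [my_inner_selfadj_apply_mul hS]
  simpa using (inner_self_eq_norm_sq (𝕜 := ℂ) (S x)).symm

set_option maxHeartbeats 2000000 in
lemma my_mixed_schwarz (a : E →L[ℂ] E) (x : E) :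
    ‖⟪a x, x⟫_ℂ‖ ≤ Real.sqrt ((⟪cfc Real.sqrt (star a * a) x, x⟫_ℂ).re) *
      Real.sqrt ((⟪cfc Real.sqrt (a * star a) x, x⟫_ℂ).re) := by
  have hp : IsSelfAdjoint (star a * a) := IsSelfAdjoint.star_mul_self a
  have hq : IsSelfAdjoint (a * star a) := IsSelfAdjoint.mul_star_self a
  have hp0 : (0 : E →L[ℂ] E) ≤ star a * a := star_mul_self_nonneg a
  have hq0 : (0 : E →L[ℂ] E) ≤ a * star a := mul_star_self_nonneg a
  set p := star a * a
  set q := a * star a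
  set α := (⟪cfc Real.sqrt p x, x⟫_ℂ).re with hα_def
  set β := (⟪cfc Real.sqrt q x, x⟫_ℂ).re with hβ_def
  have hα : 0 ≤ α := my_inner_re_nonneg
    (cfc_nonneg (fun t _ => Real.sqrt_nonneg t)) x
  have hβ : 0 ≤ β := my_inner_re_nonneg
    (cfc_nonneg (fun t _ => Real.sqrt_nonneg t)) x
  have key : ∀ ε : ℝ, 0 < ε →
      ‖⟪a x, x⟫_ℂ‖ ≤ Real.sqrt (α + ε * ‖x‖ ^ 2) * Real.sqrt β := by
    intro ε hε
    set g : ℝ → ℝ := fun t => Real.sqrt (Real.sqrt t + ε) with hg_def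
    set h2 : ℝ → ℝ := fun t => (Real.sqrt t + ε)⁻¹ with hh2_def
    have hpos : ∀ t : ℝ, 0 < Real.sqrt t + ε := fun t =>
      add_pos_of_nonneg_of_pos (Real.sqrt_nonneg t) hε
    have hgc : Continuous g :=
      Real.continuous_sqrt.comp (Real.continuous_sqrt.add continuous_const)
    have hh2c : Continuous h2 :=
      (Real.continuous_sqrt.add continuous_const).inv₀ (fun t => (hpos t).ne')
    have hsh2c : Continuous (fun t => Real.sqrt (h2 t)) :=
      Real.continuous_sqrt.comp hh2c
    set G := cfc g p with hG_def
    set Hh := cfc (fun t => Real.sqrt (h2 t)) p with hHh_def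
    have hGsa : IsSelfAdjoint G := cfc_predicate g p
    have hHsa : IsSelfAdjoint Hh := cfc_predicate _ p
    have hHG : Hh * G = 1 := by
      rw [hHh_def, hG_def, ← cfc_mul _ _ p (hsh2c.continuousOn) (hgc.continuousOn)]
      calc cfc (fun t => Real.sqrt (h2 t) * g t) p = cfc (fun _ : ℝ => (1:ℝ)) p := by
            apply cfc_congr
            intro t _
            rw [hg_def, hh2_def]
            simp only
            rw [← Real.sqrt_mul (by positivity) _, inv_mul_cancel₀ (hpos t).ne']
            exact Real.sqrt_one
        _ = 1 := cfc_one ℝ p hp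
    -- decompose a x
    have hax : a x = (a * Hh) (G x) := by
      conv_lhs => rw [show a = a * (Hh * G) by rw [hHG]; simp, ← mul_assoc]
      rfl
    have hinner : ⟪a x, x⟫_ℂ = ⟪G x, ((Hh * star a) x)⟫_ℂ := by
      rw [hax, ← ContinuousLinearMap.adjoint_inner_right (a * Hh) (G x) x]
      congr 1
      rw [← ContinuousLinearMap.star_eq_adjoint, star_mul, hHsa.star_eq]
    -- norm of G x
    have hGx : ‖G x‖ ^ 2 = α + ε * ‖x‖ ^ 2 := by
      rw [my_norm_sq_eq hGsa, hG_def,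
        ← cfc_mul _ _ p (hgc.continuousOn) (hgc.continuousOn)]
      have : cfc (fun t => g t * g t) p =
          cfc Real.sqrt p + algebraMap ℝ (E →L[ℂ] E) ε := by
        rw [← cfc_const ε p hp, ← cfc_add p _ _ (Real.continuous_sqrt.continuousOn)
          (continuousOn_const)]
        apply cfc_congr
        intro t _
        exact Real.mul_self_sqrt (hpos t).le
      rw [this]
      simp only [ContinuousLinearMap.add_apply, inner_add_left, Complex.add_re]
      rw [my_inner_re_algebraMap, ← hα_def]
    -- norm of (Hh * star a) x
    have hHx : ‖(Hh * star a) x‖ ^ 2 ≤ β := by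
      have h1 : ‖(Hh * star a) x‖ ^ 2 = (⟪(Hh * Hh) ((star a) x), (star a) x⟫_ℂ).re := by
        rw [ContinuousLinearMap.mul_apply, ← my_norm_sq_eq hHsa]
      have h2' : Hh * Hh = cfc h2 p := by
        rw [hHh_def, ← cfc_mul _ _ p (hsh2c.continuousOn) (hsh2c.continuousOn)]
        apply cfc_congr
        intro t _
        exact Real.mul_self_sqrt (by positivity)
      have h3 : ⟪(Hh * Hh) ((star a) x), (star a) x⟫_ℂ =
          ⟪(a * (Hh * Hh) * star a) x, x⟫_ℂ := by
        calc ⟪(Hh * Hh) ((star a) x), (star a) x⟫_ℂ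
            = ⟪(Hh * Hh) ((star a) x), (ContinuousLinearMap.adjoint a) x⟫_ℂ := by
              rw [ContinuousLinearMap.star_eq_adjoint]
          _ = ⟪a ((Hh * Hh) ((star a) x)), x⟫_ℂ :=
              ContinuousLinearMap.adjoint_inner_right a _ x
          _ = ⟪(a * (Hh * Hh) * star a) x, x⟫_ℂ := rfl
      have h4 : a * (Hh * Hh) * star a = cfc (fun t => h2 t * t) q := by
        rw [h2', my_intertwine a h2 hh2c, mul_assoc,
          cfc_mul h2 (fun t => t) q (hh2c.continuousOn) (continuousOn_id),
          cfc_id' ℝ q hq]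
      have h5 : cfc (fun t => h2 t * t) q ≤ cfc Real.sqrt q := by
        apply cfc_mono
        · intro t ht
          have ht0 : 0 ≤ t := spectrum_nonneg_of_nonneg hq0 ht
          rw [hh2_def]
          simp only
          rw [inv_mul_le_iff₀ (hpos t)]
          nlinarith [Real.sqrt_nonneg t, Real.mul_self_sqrt ht0]
        · exact (hh2c.mul continuous_id).continuousOn
        · exact Real.continuous_sqrt.continuousOn
      rw [h1, h3, h4]
      exact my_inner_re_mono h5 x
    have hHx' : ‖(Hh * star a) x‖ ≤ Real.sqrt β := by
      rw [show ‖(Hh * star a) x‖ = Real.sqrt (‖(Hh * star a) x‖ ^ 2) by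
        rw [Real.sqrt_sq (norm_nonneg _)]]
      exact Real.sqrt_le_sqrt hHx
    have hGx' : ‖G x‖ = Real.sqrt (α + ε * ‖x‖ ^ 2) := by
      rw [show ‖G x‖ = Real.sqrt (‖G x‖ ^ 2) by rw [Real.sqrt_sq (norm_nonneg _)], hGx]
    calc ‖⟪a x, x⟫_ℂ‖ = ‖⟪G x, ((Hh * star a) x)⟫_ℂ‖ := by rw [hinner]
      _ ≤ ‖G x‖ * ‖(Hh * star a) x‖ := norm_inner_le_norm _ _
      _ ≤ Real.sqrt (α + ε * ‖x‖ ^ 2) * Real.sqrt β := by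
          rw [hGx']
          exact mul_le_mul_of_nonneg_left hHx' (Real.sqrt_nonneg _)
  -- take the limit ε → 0⁺
  have hlim : Filter.Tendsto (fun ε : ℝ => Real.sqrt (α + ε * ‖x‖ ^ 2) * Real.sqrt β)
      (nhdsWithin 0 (Set.Ioi 0)) (nhds (Real.sqrt α * Real.sqrt β)) := by
    have hc : Continuous (fun ε : ℝ => Real.sqrt (α + ε * ‖x‖ ^ 2) * Real.sqrt β) := by
      exact (Real.continuous_sqrt.comp
        (continuous_const.add (continuous_id.mul continuous_const))).mul continuous_const
    have := hc.tendsto 0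
    simp only [add_zero, zero_mul] at this
    exact this.mono_left nhdsWithin_le_nhds
  refine ge_of_tendsto hlim ?_
  filter_upwards [self_mem_nhdsWithin] with ε hε
  exact key ε hε


lemma my_scalar_tangent {r c t : ℝ} (hr : 1 ≤ r) (hc : 0 ≤ c) (ht : 0 ≤ t) :
    c ^ r + r * c ^ (r - 1) * (t - c) ≤ t ^ r := by
  rcases eq_or_lt_of_le hc with hc0 | hc0
  · rcases eq_or_lt_of_le hr with hr1 | hr1
    · rw [← hc0, ← hr1]
      simp [Real.rpow_one]
    · rw [← hc0, Real.zero_rpow (by positivity), Real.zero_rpow (by linarith : r - 1 ≠ 0)]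
      simpa using Real.rpow_nonneg ht r
  · have hs : -1 ≤ t / c - 1 := by
      have : 0 ≤ t / c := div_nonneg ht hc
      linarith
    have hb := one_add_mul_self_le_rpow_one_add hs hr
    rw [show 1 + (t / c - 1) = t / c by ring] at hb
    have hb' := mul_le_mul_of_nonneg_left hb (Real.rpow_nonneg hc r)
    have htc : c ^ r * (t / c) ^ r = t ^ r := by
      rw [← Real.mul_rpow hc (div_nonneg ht hc), mul_div_cancel₀ t hc0.ne']
    have hcr : c ^ r = c ^ (r - 1) * c := by
      rw [← Real.rpow_add_one hc0.ne' (r - 1)]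
      ring_nf
    have key : c ^ r * (1 + r * (t / c - 1)) = c ^ r + r * c ^ (r - 1) * (t - c) := by
      rw [mul_add, mul_one]
      congr 1
      rw [hcr]
      field_simp
    rw [htc, key] at hb'
    exact hb'

lemma my_sqrt_rpow (u : ℝ) (hu : 0 ≤ u) (r : ℝ) :
    (Real.sqrt u) ^ r = Real.sqrt (u ^ r) := by
  rw [Real.sqrt_eq_rpow, Real.sqrt_eq_rpow, ← Real.rpow_mul hu, ← Real.rpow_mul hu, mul_comm]

lemma my_mccarthy_pairing (S : E →L[ℂ] E) (hS : 0 ≤ S) {r c : ℝ} (hr : 1 ≤ r) (hc : 0 ≤ c)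
    (x : E) :
    c ^ r * ‖x‖ ^ 2 + r * c ^ (r - 1) * ((⟪S x, x⟫_ℂ).re - c * ‖x‖ ^ 2) ≤
      (⟪cfc (fun t : ℝ => t ^ r) S x, x⟫_ℂ).re := by
  have hSsa : IsSelfAdjoint S := IsSelfAdjoint.of_nonneg hS
  have hcont : Continuous (fun t : ℝ => t ^ r) :=
    continuous_iff_continuousAt.mpr fun t =>
      Real.continuousAt_rpow_const t r (Or.inr (by linarith))
  have hop : cfc (fun t : ℝ => c ^ r + r * c ^ (r - 1) * (t - c)) S ≤
      cfc (fun t : ℝ => t ^ r) S := by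
    apply cfc_mono
    · intro t ht
      exact my_scalar_tangent hr hc (spectrum_nonneg_of_nonneg hS ht)
    · exact (continuous_const.add ((continuous_const).mul
        (continuous_id.sub continuous_const))).continuousOn
    · exact hcont.continuousOn
  have haff : cfc (fun t : ℝ => c ^ r + r * c ^ (r - 1) * (t - c)) S =
      algebraMap ℝ (E →L[ℂ] E) (c ^ r - r * c ^ (r - 1) * c) + (r * c ^ (r - 1)) • S := by
    calc cfc (fun t : ℝ => c ^ r + r * c ^ (r - 1) * (t - c)) S
        = cfc (fun t : ℝ => (c ^ r - r * c ^ (r - 1) * c) + (r * c ^ (r - 1)) * t) S := by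
          apply cfc_congr; intro t _; ring
      _ = cfc (fun _ : ℝ => (c ^ r - r * c ^ (r - 1) * c)) S +
            cfc (fun t : ℝ => (r * c ^ (r - 1)) * t) S := by
          exact cfc_add S _ _ continuousOn_const
            ((continuous_const.mul continuous_id).continuousOn)
      _ = algebraMap ℝ (E →L[ℂ] E) (c ^ r - r * c ^ (r - 1) * c) +
            (r * c ^ (r - 1)) • S := by
          rw [cfc_const _ S hSsa, cfc_const_mul_id _ S hSsa]
  have hpair := my_inner_re_mono hop x
  rw [haff] at hpair
  have hexp : (⟪(algebraMap ℝ (E →L[ℂ] E) (c ^ r - r * c ^ (r - 1) * c) +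
      (r * c ^ (r - 1)) • S) x, x⟫_ℂ).re =
      (c ^ r - r * c ^ (r - 1) * c) * ‖x‖ ^ 2 + (r * c ^ (r - 1)) * (⟪S x, x⟫_ℂ).re := by
    rw [ContinuousLinearMap.add_apply, inner_add_left, Complex.add_re,
      my_inner_re_algebraMap, ContinuousLinearMap.smul_apply,
      RCLike.real_smul_eq_coe_smul (K := ℂ), inner_smul_left]
    simp [Complex.conj_ofReal, Complex.mul_re]
  rw [hexp] at hpair
  linarith

lemma my_oabs_eq (a : E →L[ℂ] E) : oabs a = cfc Real.sqrt (star a * a) := rfl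

lemma my_oabs_adjoint_eq (a : E →L[ℂ] E) :
    oabs (ContinuousLinearMap.adjoint a) = cfc Real.sqrt (a * star a) := by
  have h : (ContinuousLinearMap.adjoint (ContinuousLinearMap.adjoint a)).comp
      (ContinuousLinearMap.adjoint a) = a * star a := by
    rw [ContinuousLinearMap.adjoint_adjoint]; rfl
  rw [oabs, h]

lemma my_opow_oabs (a : E →L[ℂ] E) (e : ℝ) :
    opow (oabs a) e = cfc (fun t : ℝ => t ^ e) (cfc Real.sqrt (star a * a)) := by
  rw [opow, my_oabs_eq]

lemma my_opow_oabs_adjoint (a : E →L[ℂ] E) (e : ℝ) :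
    opow (oabs (ContinuousLinearMap.adjoint a)) e =
      cfc (fun t : ℝ => t ^ e) (cfc Real.sqrt (a * star a)) := by
  rw [opow, my_oabs_adjoint_eq]

lemma my_half_smul (S T : E →L[ℂ] E) (x : E) :
    (⟪((1 / 2 : ℝ) • (S + T)) x, x⟫_ℂ).re =
      1 / 2 * ((⟪S x, x⟫_ℂ).re + (⟪T x, x⟫_ℂ).re) := by
  rw [ContinuousLinearMap.smul_apply, RCLike.real_smul_eq_coe_smul (K := ℂ), inner_smul_left,
    ContinuousLinearMap.add_apply, inner_add_left]
  simp [Complex.conj_ofReal, Complex.mul_re]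

end Aux

set_option maxHeartbeats 1000000

theorem berezin_block_diagonal_power (A : H₁ →L[ℂ] H₁) (D : H₂ →L[ℂ] H₂)
    (r : ℝ) (hr : 1 ≤ r)
    (k₁ : H₁) (k₂ : H₂) (hk : ‖k₁‖ ^ 2 + ‖k₂‖ ^ 2 = 1) :
    ‖⟪A k₁, k₁⟫_ℂ + ⟪D k₂, k₂⟫_ℂ‖ ^ r ≤
      (⟪((1 / 2 : ℝ) • (opow (oabs A) r +
          opow (oabs (ContinuousLinearMap.adjoint A)) r)) k₁, k₁⟫_ℂ).re +
      (⟪((1 / 2 : ℝ) • (opow (oabs D) r +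
          opow (oabs (ContinuousLinearMap.adjoint D)) r)) k₂, k₂⟫_ℂ).re := by
  have hr0 : (0 : ℝ) ≤ r := by linarith
  have hSA0 : (0 : H₁ →L[ℂ] H₁) ≤ cfc Real.sqrt (star A * A) :=
    cfc_nonneg (fun t _ => Real.sqrt_nonneg t)
  have hTA0 : (0 : H₁ →L[ℂ] H₁) ≤ cfc Real.sqrt (A * star A) :=
    cfc_nonneg (fun t _ => Real.sqrt_nonneg t)
  have hSD0 : (0 : H₂ →L[ℂ] H₂) ≤ cfc Real.sqrt (star D * D) :=
    cfc_nonneg (fun t _ => Real.sqrt_nonneg t)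
  have hTD0 : (0 : H₂ →L[ℂ] H₂) ≤ cfc Real.sqrt (D * star D) :=
    cfc_nonneg (fun t _ => Real.sqrt_nonneg t)
  obtain ⟨α₁, hα₁d⟩ : ∃ y, (⟪cfc Real.sqrt (star A * A) k₁, k₁⟫_ℂ).re = y := ⟨_, rfl⟩
  obtain ⟨β₁, hβ₁d⟩ : ∃ y, (⟪cfc Real.sqrt (A * star A) k₁, k₁⟫_ℂ).re = y := ⟨_, rfl⟩
  obtain ⟨α₂, hα₂d⟩ : ∃ y, (⟪cfc Real.sqrt (star D * D) k₂, k₂⟫_ℂ).re = y := ⟨_, rfl⟩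
  obtain ⟨β₂, hβ₂d⟩ : ∃ y, (⟪cfc Real.sqrt (D * star D) k₂, k₂⟫_ℂ).re = y := ⟨_, rfl⟩
  have hα₁ : 0 ≤ α₁ := hα₁d ▸ my_inner_re_nonneg hSA0 k₁
  have hβ₁ : 0 ≤ β₁ := hβ₁d ▸ my_inner_re_nonneg hTA0 k₁
  have hα₂ : 0 ≤ α₂ := hα₂d ▸ my_inner_re_nonneg hSD0 k₂
  have hβ₂ : 0 ≤ β₂ := hβ₂d ▸ my_inner_re_nonneg hTD0 k₂
  have hu : (0:ℝ) ≤ α₁ + α₂ := by linarith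
  have hv : (0:ℝ) ≤ β₁ + β₂ := by linarith
  have hms1 := my_mixed_schwarz A k₁
  have hms2 := my_mixed_schwarz D k₂
  rw [hα₁d, hβ₁d] at hms1
  rw [hα₂d, hβ₂d] at hms2
  have h1 : ‖⟪A k₁, k₁⟫_ℂ + ⟪D k₂, k₂⟫_ℂ‖ ≤
      Real.sqrt α₁ * Real.sqrt β₁ + Real.sqrt α₂ * Real.sqrt β₂ :=
    (norm_add_le _ _).trans (add_le_add hms1 hms2)
  have h2 : Real.sqrt α₁ * Real.sqrt β₁ + Real.sqrt α₂ * Real.sqrt β₂ ≤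
      Real.sqrt (α₁ + α₂) * Real.sqrt (β₁ + β₂) := by
    have hsq : (Real.sqrt α₁ * Real.sqrt β₁ + Real.sqrt α₂ * Real.sqrt β₂) ^ 2 ≤
        (α₁ + α₂) * (β₁ + β₂) := by
      nlinarith [Real.sq_sqrt hα₁, Real.sq_sqrt hβ₁, Real.sq_sqrt hα₂, Real.sq_sqrt hβ₂,
        Real.sqrt_nonneg α₁, Real.sqrt_nonneg β₁, Real.sqrt_nonneg α₂, Real.sqrt_nonneg β₂,
        sq_nonneg (Real.sqrt α₁ * Real.sqrt β₂ - Real.sqrt α₂ * Real.sqrt β₁)]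
    calc Real.sqrt α₁ * Real.sqrt β₁ + Real.sqrt α₂ * Real.sqrt β₂
        = Real.sqrt ((Real.sqrt α₁ * Real.sqrt β₁ + Real.sqrt α₂ * Real.sqrt β₂) ^ 2) :=
          (Real.sqrt_sq (by positivity)).symm
      _ ≤ Real.sqrt ((α₁ + α₂) * (β₁ + β₂)) := Real.sqrt_le_sqrt hsq
      _ = Real.sqrt (α₁ + α₂) * Real.sqrt (β₁ + β₂) := Real.sqrt_mul hu _
  have h3 : ‖⟪A k₁, k₁⟫_ℂ + ⟪D k₂, k₂⟫_ℂ‖ ^ r ≤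
      (Real.sqrt (α₁ + α₂) * Real.sqrt (β₁ + β₂)) ^ r :=
    Real.rpow_le_rpow (norm_nonneg _) (h1.trans h2) hr0
  have h4 : (Real.sqrt (α₁ + α₂) * Real.sqrt (β₁ + β₂)) ^ r =
      Real.sqrt ((α₁ + α₂) ^ r) * Real.sqrt ((β₁ + β₂) ^ r) := by
    rw [Real.mul_rpow (Real.sqrt_nonneg _) (Real.sqrt_nonneg _),
      my_sqrt_rpow _ hu, my_sqrt_rpow _ hv]
  have h5 : Real.sqrt ((α₁ + α₂) ^ r) * Real.sqrt ((β₁ + β₂) ^ r) ≤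
      ((α₁ + α₂) ^ r + (β₁ + β₂) ^ r) / 2 := by
    nlinarith [sq_nonneg (Real.sqrt ((α₁ + α₂) ^ r) - Real.sqrt ((β₁ + β₂) ^ r)),
      Real.sq_sqrt (Real.rpow_nonneg hu r), Real.sq_sqrt (Real.rpow_nonneg hv r)]
  have hmA := my_mccarthy_pairing (cfc Real.sqrt (star A * A)) hSA0 hr hu k₁
  have hmD := my_mccarthy_pairing (cfc Real.sqrt (star D * D)) hSD0 hr hu k₂
  rw [hα₁d] at hmA
  rw [hα₂d] at hmD
  have h6 : (α₁ + α₂) ^ r ≤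
      (⟪cfc (fun t : ℝ => t ^ r) (cfc Real.sqrt (star A * A)) k₁, k₁⟫_ℂ).re +
      (⟪cfc (fun t : ℝ => t ^ r) (cfc Real.sqrt (star D * D)) k₂, k₂⟫_ℂ).re := by
    calc (α₁ + α₂) ^ r
        = ((α₁ + α₂) ^ r * ‖k₁‖ ^ 2 +
            r * (α₁ + α₂) ^ (r - 1) * (α₁ - (α₁ + α₂) * ‖k₁‖ ^ 2)) +
          ((α₁ + α₂) ^ r * ‖k₂‖ ^ 2 +
            r * (α₁ + α₂) ^ (r - 1) * (α₂ - (α₁ + α₂) * ‖k₂‖ ^ 2)) := by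
          have h : ‖k₂‖ ^ 2 = 1 - ‖k₁‖ ^ 2 := by linarith
          rw [h]; ring
      _ ≤ _ := add_le_add hmA hmD
  have hmA' := my_mccarthy_pairing (cfc Real.sqrt (A * star A)) hTA0 hr hv k₁
  have hmD' := my_mccarthy_pairing (cfc Real.sqrt (D * star D)) hTD0 hr hv k₂
  rw [hβ₁d] at hmA'
  rw [hβ₂d] at hmD'
  have h7 : (β₁ + β₂) ^ r ≤
      (⟪cfc (fun t : ℝ => t ^ r) (cfc Real.sqrt (A * star A)) k₁, k₁⟫_ℂ).re +
      (⟪cfc (fun t : ℝ => t ^ r) (cfc Real.sqrt (D * star D)) k₂, k₂⟫_ℂ).re := by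
    calc (β₁ + β₂) ^ r
        = ((β₁ + β₂) ^ r * ‖k₁‖ ^ 2 +
            r * (β₁ + β₂) ^ (r - 1) * (β₁ - (β₁ + β₂) * ‖k₁‖ ^ 2)) +
          ((β₁ + β₂) ^ r * ‖k₂‖ ^ 2 +
            r * (β₁ + β₂) ^ (r - 1) * (β₂ - (β₁ + β₂) * ‖k₂‖ ^ 2)) := by
          have h : ‖k₂‖ ^ 2 = 1 - ‖k₁‖ ^ 2 := by linarith
          rw [h]; ring
      _ ≤ _ := add_le_add hmA' hmD'
  rw [my_opow_oabs A r, my_opow_oabs_adjoint A r, my_opow_oabs D r, my_opow_oabs_adjoint D r,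
    my_half_smul, my_half_smul]
  rw [h4] at h3
  linarith
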